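/- Let L be a first-order language and M an L-structure. If (āᵢ)_{i∈I} and (b̄ⱼ)_{j∈J} are cleanly collinear indiscernible sequences of κ-tuples in M, then ker((āᵢ)_{i∈I}) = dcl(E_a) ∩ dcl(E_b), where E_a and E_b are the sets of all coordinates of the tuples of the two sequences; consequently ker((āᵢ)_{i∈I}) = ker((b̄ⱼ)_{j∈J}). -/

import Mathlib

open FirstOrder

universe u

/-- A sequence `(āᵢ)_{i∈I}` of `κ`-tuples in `M` is indiscernible over `B`:
any two strictly increasing `n`-tuples of indices give, after the same finite selection of
coordinates and with any parameters from `B`, the same satisfied formulas. -/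
def IndiscernibleOver (L : FirstOrder.Language.{u, u}) {M : Type u} [L.Structure M]
    {I : Type*} [LinearOrder I] {κ : Type*} (a : I → κ → M) (B : Set M) : Prop :=
  ∀ (n : ℕ) (i i' : Fin n → I), StrictMono i → StrictMono i' →
    ∀ (s : ℕ) (sel : Fin s → Fin n × κ) (t : ℕ) (par : Fin t → M), (∀ j, par j ∈ B) →
      ∀ φ : L.Formula (Fin s ⊕ Fin t),
        (φ.Realize (Sum.elim (fun j => a (i (sel j).1) (sel j).2) par) ↔
          φ.Realize (Sum.elim (fun j => a (i' (sel j).1) (sel j).2) par))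

/-- Two sequences of `κ`-tuples are cleanly collinear if their concatenation, indexed by
the ordered sum `I ⊕ₗ J`, is indiscernible over `∅`. -/
def CleanlyCollinear (L : FirstOrder.Language.{u, u}) {M : Type u} [L.Structure M]
    {I J : Type*} [LinearOrder I] [LinearOrder J] {κ : Type*}
    (a : I → κ → M) (b : J → κ → M) : Prop :=
  IndiscernibleOver L (fun (x : I ⊕ₗ J) => Sum.elim a b (ofLex x)) (∅ : Set M)

/-- The definable closure of `A` in `M`. -/
def dclSet (L : FirstOrder.Language.{u, u}) {M : Type u} [L.Structure M]
    (A : Set M) : Set M :=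
  {d | ∃ (t : ℕ) (e : Fin t → M), (∀ i, e i ∈ A) ∧
    ∃ φ : L.Formula (Unit ⊕ Fin t),
      φ.Realize (Sum.elim (fun _ => d) e) ∧
      ∀ d' : M, φ.Realize (Sum.elim (fun _ => d') e) → d' = d}

/-- The set of all coordinates of all tuples of a sequence. -/
def seqCoords {M : Type u} {I κ : Type*} (a : I → κ → M) : Set M :=
  {x | ∃ i k, a i k = x}

/-- The kernel of a sequence of `κ`-tuples: the elements of the definable closure of its
coordinates over which the sequence is indiscernible. -/
def kernelSet (L : FirstOrder.Language.{u, u}) {M : Type u} [L.Structure M]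
    {I : Type*} [LinearOrder I] {κ : Type*} (a : I → κ → M) : Set M :=
  {d | d ∈ dclSet L (seqCoords a) ∧ IndiscernibleOver L a ({d} : Set M)}

section Aux

open FirstOrder.Language

variable {L : FirstOrder.Language.{u, u}} {M : Type u} [L.Structure M]

/-- `φ` with parameters `e` defines `d`. -/
def Defines {t : ℕ} (φ : L.Formula (Unit ⊕ Fin t)) (e : Fin t → M) (d : M) : Prop :=
  φ.Realize (Sum.elim (fun _ => d) e) ∧
    ∀ d' : M, φ.Realize (Sum.elim (fun _ => d') e) → d' = d

lemma mem_dclSet_iff {A : Set M} {d : M} :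
    d ∈ dclSet L A ↔ ∃ (t : ℕ) (e : Fin t → M), (∀ i, e i ∈ A) ∧
      ∃ φ : L.Formula (Unit ⊕ Fin t), Defines φ e d := by
  constructor
  · rintro ⟨t, e, he, φ, h1, h2⟩; exact ⟨t, e, he, φ, h1, h2⟩
  · rintro ⟨t, e, he, φ, h1, h2⟩; exact ⟨t, e, he, φ, h1, h2⟩

lemma realize_val_congr {α : Type*} (φ : L.Formula α) {v v' : α → M}
    (h : ∀ x, v x = v' x) : φ.Realize v ↔ φ.Realize v' :=
  iff_of_eq (congrArg _ (funext h))

lemma exists_strictMono_fin {I : Type*} [LinearOrder I] [Infinite I] (n : ℕ) :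
    ∃ i : Fin n → I, StrictMono i := by
  obtain ⟨s, hs⟩ := Infinite.exists_subset_card_eq I n
  exact ⟨fun k => (s.orderIsoOfFin hs k : I),
    fun x y hxy => by exact_mod_cast (s.orderIsoOfFin hs).strictMono hxy⟩

lemma strictMono_fin_append {K : Type*} [LinearOrder K] {n m : ℕ} {p : Fin n → K}
    {q : Fin m → K} (hp : StrictMono p) (hq : StrictMono q) (hpq : ∀ x y, p x < q y) :
    StrictMono (Fin.append p q) := by
  intro x y hxy
  induction x using Fin.addCases with
  | left x =>
    induction y using Fin.addCases with
    | left y =>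
      rw [Fin.append_left, Fin.append_left]
      have h2 := Fin.lt_def.mp hxy
      simp only [Fin.coe_castAdd] at h2
      exact hp (Fin.lt_def.mpr h2)
    | right y =>
      rw [Fin.append_left, Fin.append_right]
      exact hpq x y
  | right x =>
    induction y using Fin.addCases with
    | left y =>
      exfalso
      have h1 := y.isLt
      have h2 := Fin.lt_def.mp hxy
      simp only [Fin.coe_natAdd, Fin.coe_castAdd] at h2
      omega
    | right y =>
      rw [Fin.append_right, Fin.append_right]
      have h2 := Fin.lt_def.mp hxy
      simp only [Fin.coe_natAdd] at h2
      exact hq (Fin.lt_def.mpr (by omega))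

lemma exists_sorted_selection {J κ : Type*} [LinearOrder J] {b : J → κ → M} {t : ℕ}
    (e : Fin t → M) (he : ∀ m, e m ∈ seqCoords b) :
    ∃ (n : ℕ) (j : Fin n → J), StrictMono j ∧ ∃ sel : Fin t → Fin n × κ,
      ∀ m, e m = b (j (sel m).1) (sel m).2 := by
  classical
  have he' : ∀ m, ∃ i k, b i k = e m := he
  choose jdx k hk using he'
  let s : Finset J := Finset.image jdx Finset.univ
  refine ⟨s.card, fun x => (s.orderIsoOfFin rfl x : J),
    fun x y hxy => by exact_mod_cast (s.orderIsoOfFin rfl).strictMono hxy,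
    fun m => ((s.orderIsoOfFin rfl).symm
        ⟨jdx m, Finset.mem_image_of_mem jdx (Finset.mem_univ m)⟩, k m),
    fun m => ?_⟩
  simp only [OrderIso.apply_symm_apply]
  exact (hk m).symm

/-! ### Formula gadgets -/

/-- The formula over `Fin t ⊕ Fin 1` saying that `φ`, with its `Fin t` parameter slots
interpreted by the first block, defines the element in the parameter slot `Fin 1`. -/
noncomputable def definesParam {t : ℕ} (φ : L.Formula (Unit ⊕ Fin t)) :
    L.Formula (Fin t ⊕ Fin 1) :=
  (φ.relabel (Sum.elim (fun _ => Sum.inr 0) Sum.inl)) ⊓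
  (Formula.iAlls Unit
    ((φ.relabel (Sum.elim (fun _ : Unit => (Sum.inr () : (Fin t ⊕ Fin 1) ⊕ Unit))
        (fun m => Sum.inl (Sum.inl m)))).imp
      ((FirstOrder.Language.Term.var (Sum.inr () : (Fin t ⊕ Fin 1) ⊕ Unit)).equal
        (FirstOrder.Language.Term.var (Sum.inl (Sum.inr 0))))))

lemma realize_definesParam {t : ℕ} (φ : L.Formula (Unit ⊕ Fin t)) (w : Fin t → M) (d : M) :
    (definesParam φ).Realize (Sum.elim w (fun _ : Fin 1 => d)) ↔ Defines φ w d := by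
  rw [definesParam, Formula.realize_inf, Formula.realize_relabel, Formula.realize_iAlls]
  constructor
  · rintro ⟨h0, hall⟩
    constructor
    · refine (realize_val_congr φ fun x => ?_).mpr h0
      cases x with
      | inl u => rfl
      | inr m => rfl
    · intro d' hd'
      have h := hall (fun _ => d')
      rw [Formula.realize_imp, Formula.realize_relabel, Formula.realize_equal] at h
      have := h ((realize_val_congr φ fun x => ?_).mp hd')
      · simpa using this
      · cases x with
        | inl u => rfl
        | inr m => rfl
  · rintro ⟨h0, huniq⟩
    constructor
    · refine (realize_val_congr φ fun x => ?_).mp h0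
      cases x with
      | inl u => rfl
      | inr m => rfl
    · intro i
      rw [Formula.realize_imp, Formula.realize_relabel, Formula.realize_equal]
      intro h
      have := huniq (i ()) ((realize_val_congr φ fun x => ?_).mp h)
      · simpa using this
      · cases x with
        | inl u => rfl
        | inr m => rfl

/-- The formula over `Fin (t+t) ⊕ Fin 0` saying that `φ` has the same extension with
parameters from the first `t` variables as with parameters from the last `t` variables. -/
noncomputable def extEq {t : ℕ} (φ : L.Formula (Unit ⊕ Fin t)) :
    L.Formula (Fin (t + t) ⊕ Fin 0) :=
  Formula.iAlls Unit
    ((φ.relabel (Sum.elim (fun _ : Unit => (Sum.inr () : (Fin (t + t) ⊕ Fin 0) ⊕ Unit))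
        (fun m => Sum.inl (Sum.inl (Fin.castAdd t m))))).iff
     (φ.relabel (Sum.elim (fun _ : Unit => (Sum.inr () : (Fin (t + t) ⊕ Fin 0) ⊕ Unit))
        (fun m => Sum.inl (Sum.inl (Fin.natAdd t m))))))

lemma realize_extEq {t : ℕ} (φ : L.Formula (Unit ⊕ Fin t)) (w : Fin (t + t) → M)
    (z : Fin 0 → M) :
    (extEq φ).Realize (Sum.elim w z) ↔
      ∀ y : M, (φ.Realize (Sum.elim (fun _ => y) (fun m => w (Fin.castAdd t m))) ↔
        φ.Realize (Sum.elim (fun _ => y) (fun m => w (Fin.natAdd t m)))) := by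
  rw [extEq, Formula.realize_iAlls]
  constructor
  · intro h y
    have h2 := h (fun _ => y)
    rw [Formula.realize_iff, Formula.realize_relabel, Formula.realize_relabel] at h2
    refine ((realize_val_congr φ fun x => ?_).trans h2).trans (realize_val_congr φ fun x => ?_)
    · cases x with
      | inl u => rfl
      | inr m => rfl
    · cases x with
      | inl u => rfl
      | inr m => rfl
  · intro h i
    rw [Formula.realize_iff, Formula.realize_relabel, Formula.realize_relabel]
    refine ((realize_val_congr φ fun x => ?_).trans (h (i ()))).trans
      (realize_val_congr φ fun x => ?_)
    · cases x with
      | inl u => rfl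
      | inr m => rfl
    · cases x with
      | inl u => rfl
      | inr m => rfl

/-- The formula over `Fin (s+tb) ⊕ Fin 0` saying: there is `y` satisfying `φ` with
parameters the last `tb` variables, such that `ψ` holds of the first `s` variables
with all parameter slots interpreted by `y`. -/
noncomputable def pullFormula {s t' tb : ℕ} (ψ : L.Formula (Fin s ⊕ Fin t'))
    (φ : L.Formula (Unit ⊕ Fin tb)) : L.Formula (Fin (s + tb) ⊕ Fin 0) :=
  Formula.iExs Unit
    ((φ.relabel (Sum.elim (fun _ : Unit => (Sum.inr () : (Fin (s + tb) ⊕ Fin 0) ⊕ Unit))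
        (fun m => Sum.inl (Sum.inl (Fin.natAdd s m))))) ⊓
     (ψ.relabel (Sum.elim (fun k => (Sum.inl (Sum.inl (Fin.castAdd tb k)) :
          (Fin (s + tb) ⊕ Fin 0) ⊕ Unit)) (fun _ => Sum.inr ()))))

lemma realize_pullFormula {s t' tb : ℕ} (ψ : L.Formula (Fin s ⊕ Fin t'))
    (φ : L.Formula (Unit ⊕ Fin tb)) (w : Fin (s + tb) → M) (z : Fin 0 → M) :
    (pullFormula ψ φ).Realize (Sum.elim w z) ↔
      ∃ y : M, φ.Realize (Sum.elim (fun _ => y) (fun m => w (Fin.natAdd s m))) ∧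
        ψ.Realize (Sum.elim (fun k => w (Fin.castAdd tb k)) (fun _ => y)) := by
  rw [pullFormula, Formula.realize_iExs]
  constructor
  · rintro ⟨i, hi⟩
    rw [Formula.realize_inf, Formula.realize_relabel, Formula.realize_relabel] at hi
    refine ⟨i (), (realize_val_congr φ fun x => ?_).mp hi.1,
      (realize_val_congr ψ fun x => ?_).mp hi.2⟩
    · cases x with
      | inl u => rfl
      | inr m => rfl
    · cases x with
      | inl u => rfl
      | inr m => rfl
  · rintro ⟨y, h1, h2⟩
    refine ⟨fun _ => y, ?_⟩
    rw [Formula.realize_inf, Formula.realize_relabel, Formula.realize_relabel]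
    refine ⟨(realize_val_congr φ fun x => ?_).mpr h1, (realize_val_congr ψ fun x => ?_).mpr h2⟩
    · cases x with
      | inl u => rfl
      | inr m => rfl
    · cases x with
      | inl u => rfl
      | inr m => rfl

/-! ### Transfer lemmas -/

lemma defines_transfer {I : Type*} [LinearOrder I] {κ : Type*} {a : I → κ → M} {d : M}
    (had : IndiscernibleOver L a ({d} : Set M)) {t n : ℕ} (sel : Fin t → Fin n × κ)
    (φ : L.Formula (Unit ⊕ Fin t)) {i₀ : Fin n → I} (hi₀ : StrictMono i₀)
    (hdef : Defines φ (fun m => a (i₀ (sel m).1) (sel m).2) d)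
    {u : Fin n → I} (hu : StrictMono u) :
    Defines φ (fun m => a (u (sel m).1) (sel m).2) d := by
  have key := had n i₀ u hi₀ hu t sel 1 (fun _ => d) (fun _ => rfl) (definesParam φ)
  rw [realize_definesParam φ _ d, realize_definesParam φ _ d] at key
  exact key.mp hdef

lemma extEq_transfer {K κ : Type*} [LinearOrder K] {c : K → κ → M}
    (hc : IndiscernibleOver L c (∅ : Set M)) {n t : ℕ} (sel : Fin t → Fin n × κ)
    (φ : L.Formula (Unit ⊕ Fin t)) {U V : Fin (n + n) → K} (hU : StrictMono U)
    (hV : StrictMono V)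
    (h : ∀ y : M,
      (φ.Realize (Sum.elim (fun _ => y)
          (fun m => c (U (Fin.castAdd n (sel m).1)) (sel m).2)) ↔
        φ.Realize (Sum.elim (fun _ => y)
          (fun m => c (U (Fin.natAdd n (sel m).1)) (sel m).2)))) :
    ∀ y : M,
      (φ.Realize (Sum.elim (fun _ => y)
          (fun m => c (V (Fin.castAdd n (sel m).1)) (sel m).2)) ↔
        φ.Realize (Sum.elim (fun _ => y)
          (fun m => c (V (Fin.natAdd n (sel m).1)) (sel m).2))) := by
  have key := hc (n + n) U V hU hV (t + t)
    (Fin.append (fun m => (Fin.castAdd n (sel m).1, (sel m).2))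
      (fun m => (Fin.natAdd n (sel m).1, (sel m).2))) 0 Fin.elim0
    (fun j => j.elim0) (extEq φ)
  rw [realize_extEq, realize_extEq] at key
  have hL : ∀ y : M,
      (φ.Realize (Sum.elim (fun _ => y) (fun m =>
        c (U ((Fin.append (fun m => (Fin.castAdd n (sel m).1, (sel m).2))
          (fun m => (Fin.natAdd n (sel m).1, (sel m).2)) (Fin.castAdd t m)).1))
          ((Fin.append (fun m => (Fin.castAdd n (sel m).1, (sel m).2))
            (fun m => (Fin.natAdd n (sel m).1, (sel m).2)) (Fin.castAdd t m)).2))) ↔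
       φ.Realize (Sum.elim (fun _ => y) (fun m =>
        c (U ((Fin.append (fun m => (Fin.castAdd n (sel m).1, (sel m).2))
          (fun m => (Fin.natAdd n (sel m).1, (sel m).2)) (Fin.natAdd t m)).1))
          ((Fin.append (fun m => (Fin.castAdd n (sel m).1, (sel m).2))
            (fun m => (Fin.natAdd n (sel m).1, (sel m).2)) (Fin.natAdd t m)).2)))) := by
    intro y
    refine ((realize_val_congr φ fun x => ?_).trans ((h y).trans
      (realize_val_congr φ fun x => ?_)))
    · cases x with
      | inl u => rfl
      | inr m => simp only [Sum.elim_inl, Sum.elim_inr]; first | rw [Fin.append_left] | rw [Fin.append_right]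
    · cases x with
      | inl u => rfl
      | inr m => simp only [Sum.elim_inl, Sum.elim_inr]; first | rw [Fin.append_left] | rw [Fin.append_right]
  have keyV := key.mp hL
  intro y
  refine ((realize_val_congr φ fun x => ?_).trans ((keyV y).trans
    (realize_val_congr φ fun x => ?_)))
  · cases x with
    | inl u => rfl
    | inr m => simp only [Sum.elim_inl, Sum.elim_inr]; first | rw [Fin.append_left] | rw [Fin.append_right]
  · cases x with
    | inl u => rfl
    | inr m => simp only [Sum.elim_inl, Sum.elim_inr]; first | rw [Fin.append_left] | rw [Fin.append_right]

lemma pull_param {K κ : Type*} [LinearOrder K] {c : K → κ → M}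
    (hc : IndiscernibleOver L c (∅ : Set M)) {N : ℕ} {U U' : Fin N → K}
    (hU : StrictMono U) (hU' : StrictMono U') {tb : ℕ} (selb : Fin tb → Fin N × κ)
    (hagree : ∀ x, U (selb x).1 = U' (selb x).1)
    (φ : L.Formula (Unit ⊕ Fin tb)) {d : M}
    (hdef : Defines φ (fun m => c (U (selb m).1) (selb m).2) d)
    {s t' : ℕ} (sel : Fin s → Fin N × κ) (par : Fin t' → M) (hpar : ∀ k, par k = d)
    (ψ : L.Formula (Fin s ⊕ Fin t')) :
    (ψ.Realize (Sum.elim (fun x => c (U (sel x).1) (sel x).2) par) ↔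
      ψ.Realize (Sum.elim (fun x => c (U' (sel x).1) (sel x).2) par)) := by
  have hpar' : par = fun _ => d := funext hpar
  have hdef' : Defines φ (fun m => c (U' (selb m).1) (selb m).2) d := by
    have heq : (fun m => c (U' (selb m).1) (selb m).2) =
        (fun m => c (U (selb m).1) (selb m).2) := by
      funext m; rw [hagree]
    rw [heq]; exact hdef
  have key := hc N U U' hU hU' (s + tb) (Fin.append sel selb) 0 Fin.elim0
    (fun j => j.elim0) (pullFormula ψ φ)
  rw [realize_pullFormula, realize_pullFormula] at key
  have convGen : ∀ (W : Fin N → K), Defines φ (fun m => c (W (selb m).1) (selb m).2) d →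
      ((∃ y : M, φ.Realize (Sum.elim (fun _ => y) (fun m =>
          c (W ((Fin.append sel selb (Fin.natAdd s m)).1))
            ((Fin.append sel selb (Fin.natAdd s m)).2))) ∧
        ψ.Realize (Sum.elim (fun k =>
          c (W ((Fin.append sel selb (Fin.castAdd tb k)).1))
            ((Fin.append sel selb (Fin.castAdd tb k)).2)) (fun _ => y))) ↔
      ψ.Realize (Sum.elim (fun x => c (W (sel x).1) (sel x).2) par)) := by
    intro W hW
    constructor
    · rintro ⟨y, h1, h2⟩
      have hyd : y = d := by
        refine hW.2 y ((realize_val_congr φ fun x => ?_).mp h1)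
        cases x with
        | inl u => rfl
        | inr m => simp only [Sum.elim_inl, Sum.elim_inr]; first | rw [Fin.append_left] | rw [Fin.append_right]
      subst hyd
      refine (realize_val_congr ψ fun x => ?_).mp h2
      cases x with
      | inl k => simp only [Sum.elim_inl, Sum.elim_inr]; first | rw [Fin.append_left] | rw [Fin.append_right]
      | inr k => simp only [Sum.elim_inl, Sum.elim_inr, hpar']
    · intro h
      refine ⟨d, (realize_val_congr φ fun x => ?_).mpr hW.1,
        (realize_val_congr ψ fun x => ?_).mpr h⟩
      · cases x with
        | inl u => rfl
        | inr m => simp only [Sum.elim_inl, Sum.elim_inr]; first | rw [Fin.append_left] | rw [Fin.append_right]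
      · cases x with
        | inl k => simp only [Sum.elim_inl, Sum.elim_inr]; first | rw [Fin.append_left] | rw [Fin.append_right]
        | inr k => simp only [Sum.elim_inl, Sum.elim_inr, hpar']
  exact ((convGen U hdef).symm.trans key).trans (convGen U' hdef')

/-! ### Main transfer lemmas between the two sequences -/

lemma dcl_forward {I J : Type*} [LinearOrder I] [LinearOrder J] [Infinite I] [Infinite J]
    {κ : Type*} {a : I → κ → M} {b : J → κ → M} (hcc : CleanlyCollinear L a b) {d : M}
    (had : IndiscernibleOver L a ({d} : Set M)) (hd : d ∈ dclSet L (seqCoords a)) :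
    d ∈ dclSet L (seqCoords b) := by
  obtain ⟨t, e, he, φ, h1, h2⟩ := hd
  obtain ⟨n, i₀, hi₀, sel, hsel⟩ := exists_sorted_selection (b := a) e he
  have hdef0 : Defines φ (fun m => a (i₀ (sel m).1) (sel m).2) d := by
    have he' : e = fun m => a (i₀ (sel m).1) (sel m).2 := funext hsel
    rw [← he']; exact ⟨h1, h2⟩
  have step1 : ∀ u : Fin n → I, StrictMono u →
      Defines φ (fun m => a (u (sel m).1) (sel m).2) d :=
    fun u hu => defines_transfer had sel φ hi₀ hdef0 hu
  obtain ⟨w, hw⟩ := exists_strictMono_fin (I := I) (n + n)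
  obtain ⟨j, hj⟩ := exists_strictMono_fin (I := J) n
  have hc : IndiscernibleOver L (fun x : I ⊕ₗ J => Sum.elim a b (ofLex x)) (∅ : Set M) := hcc
  have hu₁ : StrictMono (fun k : Fin n => w (Fin.castAdd n k)) := by
    intro x y hxy
    refine hw (Fin.lt_def.mpr ?_)
    simpa using Fin.lt_def.mp hxy
  have hu₂ : StrictMono (fun k : Fin n => w (Fin.natAdd n k)) := by
    intro x y hxy
    refine hw (Fin.lt_def.mpr ?_)
    have := Fin.lt_def.mp hxy
    simp only [Fin.coe_natAdd]
    omega
  have hUm : StrictMono (fun x : Fin (n + n) => (toLex (Sum.inl (w x)) : I ⊕ₗ J)) :=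
    fun x y hxy => Sum.Lex.inl_lt_inl_iff.mpr (hw hxy)
  have hVm : StrictMono (Fin.append
      (fun k : Fin n => (toLex (Sum.inl (w (Fin.castAdd n k))) : I ⊕ₗ J))
      (fun k : Fin n => (toLex (Sum.inr (j k)) : I ⊕ₗ J))) :=
    strictMono_fin_append
      (fun x y hxy => Sum.Lex.inl_lt_inl_iff.mpr (hu₁ hxy))
      (fun x y hxy => Sum.Lex.inr_lt_inr_iff.mpr (hj hxy))
      (fun x y => Sum.Lex.inl_lt_inr _ _)
  have dU1 := step1 _ hu₁
  have dU2 := step1 _ hu₂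
  have hhyp : ∀ y : M,
      (φ.Realize (Sum.elim (fun _ => y) (fun m => a (w (Fin.castAdd n (sel m).1)) (sel m).2)) ↔
        φ.Realize (Sum.elim (fun _ => y) (fun m => a (w (Fin.natAdd n (sel m).1)) (sel m).2))) := by
    intro y
    constructor
    · intro hy
      have hyd : y = d := dU1.2 y hy
      subst hyd
      exact dU2.1
    · intro hy
      have hyd : y = d := dU2.2 y hy
      subst hyd
      exact dU1.1
  have hext := extEq_transfer (c := fun x : I ⊕ₗ J => Sum.elim a b (ofLex x))
      (U := fun x : Fin (n + n) => (toLex (Sum.inl (w x)) : I ⊕ₗ J)) hc sel φ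
      hUm hVm hhyp
  · have convL : ∀ y : M,
        φ.Realize (Sum.elim (fun _ => y) (fun m =>
          (fun x : I ⊕ₗ J => Sum.elim a b (ofLex x))
            ((Fin.append (fun k : Fin n => (toLex (Sum.inl (w (Fin.castAdd n k))) : I ⊕ₗ J))
              (fun k : Fin n => (toLex (Sum.inr (j k)) : I ⊕ₗ J)))
                (Fin.castAdd n (sel m).1)) (sel m).2)) ↔
        φ.Realize (Sum.elim (fun _ => y) (fun m => a (w (Fin.castAdd n (sel m).1)) (sel m).2)) := by
      intro y
      refine realize_val_congr φ fun x => ?_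
      cases x with
      | inl u => rfl
      | inr m =>
        simp only [Sum.elim_inl, Sum.elim_inr]
        rw [Fin.append_left]
        try rfl
    have convR : ∀ y : M,
        φ.Realize (Sum.elim (fun _ => y) (fun m =>
          (fun x : I ⊕ₗ J => Sum.elim a b (ofLex x))
            ((Fin.append (fun k : Fin n => (toLex (Sum.inl (w (Fin.castAdd n k))) : I ⊕ₗ J))
              (fun k : Fin n => (toLex (Sum.inr (j k)) : I ⊕ₗ J)))
                (Fin.natAdd n (sel m).1)) (sel m).2)) ↔
        φ.Realize (Sum.elim (fun _ => y) (fun m => b (j (sel m).1) (sel m).2)) := by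
      intro y
      refine realize_val_congr φ fun x => ?_
      cases x with
      | inl u => rfl
      | inr m =>
        simp only [Sum.elim_inl, Sum.elim_inr]
        rw [Fin.append_right]
        try rfl
    have hbdef : Defines φ (fun m => b (j (sel m).1) (sel m).2) d := by
      have dU1 := step1 _ hu₁
      constructor
      · exact (convR d).mp ((hext d).mp ((convL d).mpr dU1.1))
      · intro d' hd'
        exact dU1.2 d' ((convL d').mp ((hext d').mpr ((convR d').mpr hd')))
    exact ⟨t, fun m => b (j (sel m).1) (sel m).2,
      fun m => ⟨j (sel m).1, (sel m).2, rfl⟩, φ, hbdef.1, hbdef.2⟩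

lemma dcl_backward {I J : Type*} [LinearOrder I] [LinearOrder J] [Infinite I] [Infinite J]
    {κ : Type*} {a : I → κ → M} {b : J → κ → M} (hcc : CleanlyCollinear L a b) {d : M}
    (hbd : IndiscernibleOver L b ({d} : Set M)) (hd : d ∈ dclSet L (seqCoords b)) :
    d ∈ dclSet L (seqCoords a) := by
  obtain ⟨t, e, he, φ, h1, h2⟩ := hd
  obtain ⟨n, j₀, hj₀, sel, hsel⟩ := exists_sorted_selection (b := b) e he
  have hdef0 : Defines φ (fun m => b (j₀ (sel m).1) (sel m).2) d := by
    have he' : e = fun m => b (j₀ (sel m).1) (sel m).2 := funext hsel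
    rw [← he']; exact ⟨h1, h2⟩
  have step1 : ∀ u : Fin n → J, StrictMono u →
      Defines φ (fun m => b (u (sel m).1) (sel m).2) d :=
    fun u hu => defines_transfer hbd sel φ hj₀ hdef0 hu
  obtain ⟨w, hw⟩ := exists_strictMono_fin (I := J) (n + n)
  obtain ⟨i, hi⟩ := exists_strictMono_fin (I := I) n
  have hc : IndiscernibleOver L (fun x : I ⊕ₗ J => Sum.elim a b (ofLex x)) (∅ : Set M) := hcc
  have hu₁ : StrictMono (fun k : Fin n => w (Fin.castAdd n k)) := by
    intro x y hxy
    refine hw (Fin.lt_def.mpr ?_)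
    simpa using Fin.lt_def.mp hxy
  have hu₂ : StrictMono (fun k : Fin n => w (Fin.natAdd n k)) := by
    intro x y hxy
    refine hw (Fin.lt_def.mpr ?_)
    have := Fin.lt_def.mp hxy
    simp only [Fin.coe_natAdd]
    omega
  have hUm : StrictMono (fun x : Fin (n + n) => (toLex (Sum.inr (w x)) : I ⊕ₗ J)) :=
    fun x y hxy => Sum.Lex.inr_lt_inr_iff.mpr (hw hxy)
  have hVm : StrictMono (Fin.append
      (fun k : Fin n => (toLex (Sum.inl (i k)) : I ⊕ₗ J))
      (fun k : Fin n => (toLex (Sum.inr (w (Fin.natAdd n k))) : I ⊕ₗ J))) :=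
    strictMono_fin_append
      (fun x y hxy => Sum.Lex.inl_lt_inl_iff.mpr (hi hxy))
      (fun x y hxy => Sum.Lex.inr_lt_inr_iff.mpr (hu₂ hxy))
      (fun x y => Sum.Lex.inl_lt_inr _ _)
  have dU1 := step1 _ hu₁
  have dU2 := step1 _ hu₂
  have hhyp : ∀ y : M,
      (φ.Realize (Sum.elim (fun _ => y) (fun m => b (w (Fin.castAdd n (sel m).1)) (sel m).2)) ↔
        φ.Realize (Sum.elim (fun _ => y) (fun m => b (w (Fin.natAdd n (sel m).1)) (sel m).2))) := by
    intro y
    constructor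
    · intro hy
      have hyd : y = d := dU1.2 y hy
      subst hyd
      exact dU2.1
    · intro hy
      have hyd : y = d := dU2.2 y hy
      subst hyd
      exact dU1.1
  have hext := extEq_transfer (c := fun x : I ⊕ₗ J => Sum.elim a b (ofLex x))
      (U := fun x : Fin (n + n) => (toLex (Sum.inr (w x)) : I ⊕ₗ J)) hc sel φ
      hUm hVm hhyp
  · have convL : ∀ y : M,
        φ.Realize (Sum.elim (fun _ => y) (fun m =>
          (fun x : I ⊕ₗ J => Sum.elim a b (ofLex x))
            ((Fin.append (fun k : Fin n => (toLex (Sum.inl (i k)) : I ⊕ₗ J))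
              (fun k : Fin n => (toLex (Sum.inr (w (Fin.natAdd n k))) : I ⊕ₗ J)))
                (Fin.castAdd n (sel m).1)) (sel m).2)) ↔
        φ.Realize (Sum.elim (fun _ => y) (fun m => a (i (sel m).1) (sel m).2)) := by
      intro y
      refine realize_val_congr φ fun x => ?_
      cases x with
      | inl u => rfl
      | inr m =>
        simp only [Sum.elim_inl, Sum.elim_inr]
        rw [Fin.append_left]
        try rfl
    have convR : ∀ y : M,
        φ.Realize (Sum.elim (fun _ => y) (fun m =>
          (fun x : I ⊕ₗ J => Sum.elim a b (ofLex x))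
            ((Fin.append (fun k : Fin n => (toLex (Sum.inl (i k)) : I ⊕ₗ J))
              (fun k : Fin n => (toLex (Sum.inr (w (Fin.natAdd n k))) : I ⊕ₗ J)))
                (Fin.natAdd n (sel m).1)) (sel m).2)) ↔
        φ.Realize (Sum.elim (fun _ => y) (fun m => b (w (Fin.natAdd n (sel m).1)) (sel m).2)) := by
      intro y
      refine realize_val_congr φ fun x => ?_
      cases x with
      | inl u => rfl
      | inr m =>
        simp only [Sum.elim_inl, Sum.elim_inr]
        rw [Fin.append_right]
        try rfl
    have hadef : Defines φ (fun m => a (i (sel m).1) (sel m).2) d := by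
      have dU2 := step1 _ hu₂
      constructor
      · exact (convL d).mp ((hext d).mpr ((convR d).mpr dU2.1))
      · intro d' hd'
        exact dU2.2 d' ((convR d').mp ((hext d').mp ((convL d').mpr hd')))
    exact ⟨t, fun m => a (i (sel m).1) (sel m).2,
      fun m => ⟨i (sel m).1, (sel m).2, rfl⟩, φ, hadef.1, hadef.2⟩

lemma indisc_a {I J : Type*} [LinearOrder I] [LinearOrder J] [Infinite I] [Infinite J]
    {κ : Type*} {a : I → κ → M} {b : J → κ → M} (hcc : CleanlyCollinear L a b) {d : M}
    (hd : d ∈ dclSet L (seqCoords b)) : IndiscernibleOver L a ({d} : Set M) := by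
  obtain ⟨tb, e, he, φ, h1, h2⟩ := hd
  obtain ⟨mm, j, hj, selb0, hsel⟩ := exists_sorted_selection (b := b) e he
  intro n i i' hi hi' s sel t' par hparmem ψ
  have hc : IndiscernibleOver L (fun x : I ⊕ₗ J => Sum.elim a b (ofLex x)) (∅ : Set M) := hcc
  have hpar : ∀ k, par k = d := fun k => hparmem k
  have hUm : StrictMono (Fin.append (fun k : Fin n => (toLex (Sum.inl (i k)) : I ⊕ₗ J))
      (fun k : Fin mm => (toLex (Sum.inr (j k)) : I ⊕ₗ J))) :=
    strictMono_fin_append (fun x y hxy => Sum.Lex.inl_lt_inl_iff.mpr (hi hxy))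
      (fun x y hxy => Sum.Lex.inr_lt_inr_iff.mpr (hj hxy))
      (fun x y => Sum.Lex.inl_lt_inr _ _)
  have hU'm : StrictMono (Fin.append (fun k : Fin n => (toLex (Sum.inl (i' k)) : I ⊕ₗ J))
      (fun k : Fin mm => (toLex (Sum.inr (j k)) : I ⊕ₗ J))) :=
    strictMono_fin_append (fun x y hxy => Sum.Lex.inl_lt_inl_iff.mpr (hi' hxy))
      (fun x y hxy => Sum.Lex.inr_lt_inr_iff.mpr (hj hxy))
      (fun x y => Sum.Lex.inl_lt_inr _ _)
  have hagree : ∀ x : Fin tb,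
      (Fin.append (fun k : Fin n => (toLex (Sum.inl (i k)) : I ⊕ₗ J))
        (fun k : Fin mm => (toLex (Sum.inr (j k)) : I ⊕ₗ J)))
          ((fun m => (Fin.natAdd n (selb0 m).1, (selb0 m).2)) x).1 =
      (Fin.append (fun k : Fin n => (toLex (Sum.inl (i' k)) : I ⊕ₗ J))
        (fun k : Fin mm => (toLex (Sum.inr (j k)) : I ⊕ₗ J)))
          ((fun m => (Fin.natAdd n (selb0 m).1, (selb0 m).2)) x).1 := by
    intro x
    simp only []
    rw [Fin.append_right, Fin.append_right]
  have hdef : Defines φ (fun m =>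
      (fun x : I ⊕ₗ J => Sum.elim a b (ofLex x))
        ((Fin.append (fun k : Fin n => (toLex (Sum.inl (i k)) : I ⊕ₗ J))
          (fun k : Fin mm => (toLex (Sum.inr (j k)) : I ⊕ₗ J)))
            ((fun m => (Fin.natAdd n (selb0 m).1, (selb0 m).2)) m).1)
        ((fun m => (Fin.natAdd n (selb0 m).1, (selb0 m).2)) m).2) d := by
    have heq : (fun m =>
        (fun x : I ⊕ₗ J => Sum.elim a b (ofLex x))
          ((Fin.append (fun k : Fin n => (toLex (Sum.inl (i k)) : I ⊕ₗ J))
            (fun k : Fin mm => (toLex (Sum.inr (j k)) : I ⊕ₗ J)))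
              ((fun m => (Fin.natAdd n (selb0 m).1, (selb0 m).2)) m).1)
          ((fun m => (Fin.natAdd n (selb0 m).1, (selb0 m).2)) m).2) = e := by
      funext m
      simp only []
      rw [Fin.append_right]
      try rfl
      exact (hsel m).symm
    rw [heq]; exact ⟨h1, h2⟩
  have key := pull_param hc hUm hU'm (fun m => (Fin.natAdd n (selb0 m).1, (selb0 m).2))
    hagree φ hdef (fun x => (Fin.castAdd mm (sel x).1, (sel x).2)) par hpar ψ
  refine ((realize_val_congr ψ fun x => ?_).trans (key.trans
    (realize_val_congr ψ fun x => ?_)))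
  · cases x with
    | inl k =>
      simp only [Sum.elim_inl]
      rw [Fin.append_left]
      try rfl
    | inr k => rfl
  · cases x with
    | inl k =>
      simp only [Sum.elim_inl]
      rw [Fin.append_left]
      try rfl
    | inr k => rfl

lemma indisc_b {I J : Type*} [LinearOrder I] [LinearOrder J] [Infinite I] [Infinite J]
    {κ : Type*} {a : I → κ → M} {b : J → κ → M} (hcc : CleanlyCollinear L a b) {d : M}
    (hd : d ∈ dclSet L (seqCoords a)) : IndiscernibleOver L b ({d} : Set M) := by
  obtain ⟨ta, e, he, φ, h1, h2⟩ := hd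
  obtain ⟨mm, ia, hia, sela0, hsel⟩ := exists_sorted_selection (b := a) e he
  intro n i i' hi hi' s sel t' par hparmem ψ
  have hc : IndiscernibleOver L (fun x : I ⊕ₗ J => Sum.elim a b (ofLex x)) (∅ : Set M) := hcc
  have hpar : ∀ k, par k = d := fun k => hparmem k
  have hUm : StrictMono (Fin.append (fun k : Fin mm => (toLex (Sum.inl (ia k)) : I ⊕ₗ J))
      (fun k : Fin n => (toLex (Sum.inr (i k)) : I ⊕ₗ J))) :=
    strictMono_fin_append (fun x y hxy => Sum.Lex.inl_lt_inl_iff.mpr (hia hxy))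
      (fun x y hxy => Sum.Lex.inr_lt_inr_iff.mpr (hi hxy))
      (fun x y => Sum.Lex.inl_lt_inr _ _)
  have hU'm : StrictMono (Fin.append (fun k : Fin mm => (toLex (Sum.inl (ia k)) : I ⊕ₗ J))
      (fun k : Fin n => (toLex (Sum.inr (i' k)) : I ⊕ₗ J))) :=
    strictMono_fin_append (fun x y hxy => Sum.Lex.inl_lt_inl_iff.mpr (hia hxy))
      (fun x y hxy => Sum.Lex.inr_lt_inr_iff.mpr (hi' hxy))
      (fun x y => Sum.Lex.inl_lt_inr _ _)
  have hagree : ∀ x : Fin ta,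
      (Fin.append (fun k : Fin mm => (toLex (Sum.inl (ia k)) : I ⊕ₗ J))
        (fun k : Fin n => (toLex (Sum.inr (i k)) : I ⊕ₗ J)))
          ((fun m => (Fin.castAdd n (sela0 m).1, (sela0 m).2)) x).1 =
      (Fin.append (fun k : Fin mm => (toLex (Sum.inl (ia k)) : I ⊕ₗ J))
        (fun k : Fin n => (toLex (Sum.inr (i' k)) : I ⊕ₗ J)))
          ((fun m => (Fin.castAdd n (sela0 m).1, (sela0 m).2)) x).1 := by
    intro x
    simp only []
    rw [Fin.append_left, Fin.append_left]
  have hdef : Defines φ (fun m =>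
      (fun x : I ⊕ₗ J => Sum.elim a b (ofLex x))
        ((Fin.append (fun k : Fin mm => (toLex (Sum.inl (ia k)) : I ⊕ₗ J))
          (fun k : Fin n => (toLex (Sum.inr (i k)) : I ⊕ₗ J)))
            ((fun m => (Fin.castAdd n (sela0 m).1, (sela0 m).2)) m).1)
        ((fun m => (Fin.castAdd n (sela0 m).1, (sela0 m).2)) m).2) d := by
    have heq : (fun m =>
        (fun x : I ⊕ₗ J => Sum.elim a b (ofLex x))
          ((Fin.append (fun k : Fin mm => (toLex (Sum.inl (ia k)) : I ⊕ₗ J))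
            (fun k : Fin n => (toLex (Sum.inr (i k)) : I ⊕ₗ J)))
              ((fun m => (Fin.castAdd n (sela0 m).1, (sela0 m).2)) m).1)
          ((fun m => (Fin.castAdd n (sela0 m).1, (sela0 m).2)) m).2) = e := by
      funext m
      simp only []
      rw [Fin.append_left]
      try rfl
      exact (hsel m).symm
    rw [heq]; exact ⟨h1, h2⟩
  have key := pull_param hc hUm hU'm (fun m => (Fin.castAdd n (sela0 m).1, (sela0 m).2))
    hagree φ hdef (fun x => (Fin.natAdd mm (sel x).1, (sel x).2)) par hpar ψ
  refine ((realize_val_congr ψ fun x => ?_).trans (key.trans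
    (realize_val_congr ψ fun x => ?_)))
  · cases x with
    | inl k =>
      simp only [Sum.elim_inl]
      rw [Fin.append_right]
      try rfl
    | inr k => rfl
  · cases x with
    | inl k =>
      simp only [Sum.elim_inl]
      rw [Fin.append_right]
      try rfl
    | inr k => rfl

end Aux

/-- Theorem on kernels: if `(āᵢ)_{i∈I}` and `(b̄ⱼ)_{j∈J}` are cleanly
collinear indiscernible sequences, then `ker((āᵢ)) = dcl(E_a) ∩ dcl(E_b)`, where `E_a`,
`E_b` are the sets of coordinates of the two sequences; consequently
`ker((āᵢ)) = ker((b̄ⱼ))`. -/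
theorem stmt_12 {L : FirstOrder.Language.{u, u}} {M : Type u} [L.Structure M]
    {I J : Type*} [LinearOrder I] [LinearOrder J] [Infinite I] [Infinite J]
    {κ : Type*} (a : I → κ → M) (b : J → κ → M)
    (ha : IndiscernibleOver L a (∅ : Set M))
    (hb : IndiscernibleOver L b (∅ : Set M))
    (hcc : CleanlyCollinear L a b) :
    kernelSet L a = dclSet L (seqCoords a) ∩ dclSet L (seqCoords b) ∧
    kernelSet L a = kernelSet L b := by
  have h1 : kernelSet L a = dclSet L (seqCoords a) ∩ dclSet L (seqCoords b) := by
    ext d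
    constructor
    · rintro ⟨hdcl, hind⟩
      exact ⟨hdcl, dcl_forward hcc hind hdcl⟩
    · rintro ⟨hda, hdb⟩
      exact ⟨hda, indisc_a hcc hdb⟩
  have h2 : kernelSet L b = dclSet L (seqCoords a) ∩ dclSet L (seqCoords b) := by
    ext d
    constructor
    · rintro ⟨hdclb, hindb⟩
      exact ⟨dcl_backward hcc hindb hdclb, hdclb⟩
    · rintro ⟨hda, hdb⟩
      exact ⟨hdb, indisc_b hcc hda⟩
  exact ⟨h1, h1.trans h2.symm⟩
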